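/- Let S = {1,…,m} be a finite set, let q be the uniform pmf q(i) = 1/m, let d > 0 be such that C := m/(1+d) is a positive integer, let X ⊆ ℝⁿ, and let f : X × S → ℝ. Let A = { pmf p : p(i)/q(i) ≤ 1+d for all i }. Then a point x* ∈ X minimizes x ↦ max_{p ∈ A} Σ_{i∈S} p(i)·f(x,i) over X if and only if x* minimizes x ↦ max over C-element subsets T ⊆ S of (1/C)·Σ_{i∈T} f(x,i) over X. -/

import Mathlib

/-- Key inequality: if `T` maximizes the sum of `g` over `C`-element sets, then any
`p` with `0 ≤ p ≤ 1/C` and `∑ p = 1` satisfies `∑ p i * g i ≤ (∑ i ∈ T, g i) / C`. -/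
lemma key_avg_bound (m C : ℕ) (hC1 : 1 ≤ C) (g : Fin m → ℝ)
    (T : Finset (Fin m)) (hTcard : T.card = C)
    (hTmax : ∀ T' : Finset (Fin m), T'.card = C → ∑ i ∈ T', g i ≤ ∑ i ∈ T, g i)
    (p : Fin m → ℝ) (hp0 : ∀ i, 0 ≤ p i) (hp1 : ∑ i, p i = 1)
    (hpb : ∀ i, p i ≤ 1 / (C : ℝ)) :
    ∑ i, p i * g i ≤ (∑ i ∈ T, g i) / (C : ℝ) := by
  have hCpos : (0 : ℝ) < C := by exact_mod_cast hC1
  have hTne : T.Nonempty := Finset.card_pos.mp (by omega)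
  obtain ⟨i₀, hi₀, hmin⟩ := T.exists_min_image g hTne
  set t := g i₀ with ht
  have hoff : ∀ j, j ∉ T → g j ≤ t := by
    intro j hj
    have hins : (insert j (T.erase i₀)).card = C := by
      rw [Finset.card_insert_of_notMem (fun h => hj (Finset.mem_of_mem_erase h)),
        Finset.card_erase_of_mem hi₀, hTcard]
      omega
    have := hTmax _ hins
    rw [Finset.sum_insert (fun h => hj (Finset.mem_of_mem_erase h)),
      Finset.sum_erase_eq_sub hi₀] at this
    linarith
  have split : ∑ i, p i * g i = t + ∑ i, p i * (g i - t) := by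
    have : ∑ i, p i * (g i - t) = ∑ i, p i * g i - (∑ i, p i) * t := by
      rw [Finset.sum_mul, ← Finset.sum_sub_distrib]
      congr 1; ext i; ring
    rw [this, hp1]; ring
  rw [split]
  have hsplit2 : ∑ i, p i * (g i - t) =
      ∑ i ∈ T, p i * (g i - t) + ∑ i ∈ Tᶜ, p i * (g i - t) :=
    (Finset.sum_add_sum_compl T _).symm
  have h1 : ∑ i ∈ T, p i * (g i - t) ≤ ∑ i ∈ T, (1 / (C : ℝ)) * (g i - t) := by
    apply Finset.sum_le_sum
    intro i hi
    have : 0 ≤ g i - t := by have := hmin i hi; linarith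
    exact mul_le_mul_of_nonneg_right (hpb i) this
  have h2 : ∑ i ∈ Tᶜ, p i * (g i - t) ≤ 0 := by
    apply Finset.sum_nonpos
    intro i hi
    have hnotT : i ∉ T := Finset.mem_compl.mp hi
    have : g i - t ≤ 0 := by have := hoff i hnotT; linarith
    exact mul_nonpos_of_nonneg_of_nonpos (hp0 i) this
  have h3 : ∑ i ∈ T, (1 / (C : ℝ)) * (g i - t) =
      (∑ i ∈ T, g i) / C - t := by
    rw [← Finset.mul_sum, Finset.sum_sub_distrib, Finset.sum_const, hTcard]
    field_simp
    rw [nsmul_eq_mul]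
  nlinarith [hsplit2, h1, h2, h3]

theorem ddroc_minimizers_eq_worst_C_average_minimizers
    (n m : ℕ) (hm : 1 ≤ m) (d : ℝ) (hd : 0 < d)
    (C : ℕ) (hC1 : 1 ≤ C) (hCd : (C : ℝ) = (m : ℝ) / (1 + d))
    (X : Set (Fin n → ℝ)) (f : (Fin n → ℝ) → Fin m → ℝ)
    (xstar : Fin n → ℝ) (hxstar : xstar ∈ X) :
    let q : Fin m → ℝ := fun _ => 1 / (m : ℝ)
    let A : Set (Fin m → ℝ) :=
      {p | (∀ i, 0 ≤ p i) ∧ ∑ i, p i = 1 ∧ ∀ i, p i / q i ≤ 1 + d}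
    let J₁ : (Fin n → ℝ) → ℝ := fun x => sSup ((fun p => ∑ i, p i * f x i) '' A)
    let J₂ : (Fin n → ℝ) → ℝ := fun x =>
      sSup {w : ℝ | ∃ T : Finset (Fin m), T.card = C ∧ w = (∑ i ∈ T, f x i) / (C : ℝ)}
    (∀ x ∈ X, J₁ xstar ≤ J₁ x) ↔ (∀ x ∈ X, J₂ xstar ≤ J₂ x) := by
  intro q A J₁ J₂
  have hd1 : (0:ℝ) < 1 + d := by linarith
  have hmpos : (0:ℝ) < m := by exact_mod_cast hm
  have hCpos : (0:ℝ) < C := by exact_mod_cast hC1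
  have hmC : (m : ℝ) = C * (1 + d) := by rw [hCd]; field_simp
  have hCm : C ≤ m := by
    have : (C:ℝ) ≤ m := by rw [hmC]; nlinarith
    exact_mod_cast this
  -- there exists a C-element subset
  obtain ⟨T₀, _, hT₀card⟩ := Finset.exists_subset_card_eq (s := (Finset.univ : Finset (Fin m))) (n := C)
    (by simpa using hCm)
  -- indicator pmf of a C-set is in A, and gives the C-average
  have hind : ∀ (x : Fin n → ℝ) (T : Finset (Fin m)), T.card = C →
      ((∑ i ∈ T, f x i) / (C : ℝ)) ∈ (fun p => ∑ i, p i * f x i) '' A := by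
    intro x T hT
    refine ⟨fun i => if i ∈ T then 1 / (C : ℝ) else 0, ⟨?_, ?_, ?_⟩, ?_⟩
    · intro i; positivity
    · rw [Finset.sum_ite_mem, Finset.univ_inter, Finset.sum_const, hT]
      field_simp
      rw [nsmul_eq_mul, mul_one_div_cancel hCpos.ne']
    · intro i
      have hkey : (1 / (C:ℝ)) * m = 1 + d := by
        rw [hmC]; field_simp
      simp only [q, div_div_eq_mul_div, div_one]
      split
      · rw [hkey]
      · simpa using le_of_lt hd1
    · simp only [ite_mul, zero_mul, Finset.sum_ite_mem, Finset.univ_inter,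
        ← Finset.sum_div, Finset.mul_sum]
      rw [Finset.sum_div]
      congr 1; ext i; ring
  -- the maximizing C-set
  have hJeq : ∀ x, J₁ x = J₂ x := by
    intro x
    set g := f x with hg
    set S₂ : Set ℝ := {w : ℝ | ∃ T : Finset (Fin m), T.card = C ∧ w = (∑ i ∈ T, g i) / (C : ℝ)}
      with hS₂
    have hS₂ne : S₂.Nonempty := ⟨_, T₀, hT₀card, rfl⟩
    obtain ⟨T, hTmem, hTmax⟩ := Finset.exists_max_image
      (Finset.univ.powersetCard C) (fun T => ∑ i ∈ T, g i)
      ⟨T₀, Finset.mem_powersetCard_univ.mpr hT₀card⟩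
    have hTcard : T.card = C := Finset.mem_powersetCard_univ.mp hTmem
    have hTmax' : ∀ T' : Finset (Fin m), T'.card = C → ∑ i ∈ T', g i ≤ ∑ i ∈ T, g i :=
      fun T' h => hTmax T' (Finset.mem_powersetCard_univ.mpr h)
    -- every element of the image of A is ≤ the max C-average
    have hub : ∀ y ∈ (fun p => ∑ i, p i * g i) '' A, y ≤ (∑ i ∈ T, g i) / C := by
      rintro y ⟨p, ⟨hp0, hp1, hpA⟩, rfl⟩
      apply key_avg_bound m C hC1 g T hTcard hTmax' p hp0 hp1
      intro i
      have hthis := hpA i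
      simp only [q, one_div] at hthis
      rw [div_inv_eq_mul] at hthis
      rw [le_div_iff₀ hCpos]
      nlinarith [hthis, hp0 i]
    have hS₂sub : S₂ ⊆ (fun p => ∑ i, p i * g i) '' A := by
      rintro w ⟨T', hT', rfl⟩; exact hind x T' hT'
    have hbdd : BddAbove ((fun p => ∑ i, p i * g i) '' A) := ⟨_, hub⟩
    apply le_antisymm
    · apply csSup_le (hS₂ne.mono hS₂sub)
      intro y hy
      exact le_trans (hub y hy) (le_csSup (hbdd.mono hS₂sub) ⟨T, hTcard, rfl⟩)
    · exact csSup_le_csSup hbdd hS₂ne hS₂sub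
  constructor <;> intro h x hx <;> [rw [← hJeq, ← hJeq]; rw [hJeq, hJeq]] <;> exact h x hx
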